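/- arXiv:2402.15568 — 5 statements merged into one kernel-verified Lean document; each statement's English description precedes it below -/
import Mathlib

section
/- Cauchy–Binet expansion of twistor coordinates: let k, m, n be positive integers with k + m ≤ n, let C be a real k×n matrix, Z a real n×(k+m) matrix, and I = {i_1 < … < i_m} ⊆ {1,…,n} an m-element subset. Then ⟪I⟫_{C,Z} = Σ_J ε(J,I)·⟨J⟩_C·det(Z_{J∪I}), where the sum runs over all k-element subsets J ⊆ {1,…,n}∖I, det(Z_{J∪I}) denotes the (k+m)×(k+m) minor of Z on the rows indexed by J∪I taken in increasing order, and ε(J,I) is the sign of the permutation sorting into increasing order the list consisting of the elements of J in increasing order followed by the elements of I in increasing order. -/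
open Finset

/-- The `k × k` minor `⟨J⟩_C` of a `k × n` matrix `C` on the columns indexed by `J`,
taken in increasing order (junk value `0` if `J.card ≠ k`). -/
noncomputable def colMinor {k n : ℕ} (C : Matrix (Fin k) (Fin n) ℝ)
    (J : Finset (Fin n)) : ℝ :=
  if h : J.card = k then (C.submatrix id ⇑(J.orderEmbOfFin h)).det else 0

/-- The `p × p` minor of an `n × p` matrix `Z` on the rows indexed by `S`,
taken in increasing order (junk value `0` if `S.card ≠ p`). -/
noncomputable def rowMinor {n p : ℕ} (Z : Matrix (Fin n) (Fin p) ℝ)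
    (S : Finset (Fin n)) : ℝ :=
  if h : S.card = p then (Z.submatrix ⇑(S.orderEmbOfFin h) id).det else 0

/-- The twistor coordinate `⟪I⟫_{C,Z}`: the determinant of the `(k+m) × (k+m)` matrix
whose first `k` rows are the rows of `C * Z` and whose last `m` rows are the rows of `Z`
indexed by `I`, in increasing order (junk value `0` if `I.card ≠ m`). -/
noncomputable def twistor {k m n : ℕ} (C : Matrix (Fin k) (Fin n) ℝ)
    (Z : Matrix (Fin n) (Fin (k + m)) ℝ) (I : Finset (Fin n)) : ℝ :=
  if h : I.card = m then
    ((Matrix.fromRows (C * Z) (Z.submatrix ⇑(I.orderEmbOfFin h) id)).submatrix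
      ⇑finSumFinEquiv.symm id).det
  else 0

/-- `ε(J, I)`: the sign of the permutation sorting into increasing order the list
consisting of the elements of `J` in increasing order followed by the elements of `I`
in increasing order; it equals `(-1)` raised to the number of cross inversions, i.e.
pairs `(j, i) ∈ J × I` with `i < j`. -/
noncomputable def interleavingSign {n : ℕ} (J I : Finset (Fin n)) : ℝ :=
  (-1 : ℝ) ^ ((J ×ˢ I).filter fun p => p.2 < p.1).card

open Matrix Equiv in
private lemma sign_cast_eq_pow {N : ℕ} (σ : Equiv.Perm (Fin N)) :
    ((Equiv.Perm.sign σ : ℤ) : ℝ) =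
      (-1 : ℝ) ^ ((Equiv.Perm.finPairsLT N).filter fun x => σ x.1 ≤ σ x.2).card := by
  have h : Equiv.Perm.sign σ = Equiv.Perm.signAux σ := by
    refine Equiv.Perm.swap_induction_on σ ?_ ?_
    · simp [Equiv.Perm.signAux_one]
    · intro f x y hxy ih
      rw [Equiv.Perm.sign_mul, Equiv.Perm.sign_swap hxy, Equiv.Perm.signAux_mul,
        Equiv.Perm.signAux_swap hxy, ih]
  rw [h]
  unfold Equiv.Perm.signAux
  push_cast
  rw [show (fun i : Σ _ : Fin N, Fin N => (((if σ i.fst ≤ σ i.snd then -1 else 1 : ℤˣ) : ℤ) : ℝ))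
      = fun i => if σ i.fst ≤ σ i.snd then (-1 : ℝ) else 1 by
    funext i; split <;> simp]
  rw [Finset.prod_ite, Finset.prod_const, Finset.prod_const, one_pow, mul_one]


open Matrix Equiv in
private lemma det_mul_expand {p n : ℕ} (A : Matrix (Fin p) (Fin n) ℝ)
    (B : Matrix (Fin n) (Fin p) ℝ) :
    (A * B).det = ∑ f : Fin p → Fin n, (∏ i, B (f i) i) * (A.submatrix id f).det :=
  calc (A * B).det
      = ∑ σ : Equiv.Perm (Fin p), ((Equiv.Perm.sign σ : ℤ) : ℝ) *
          ∑ f : Fin p → Fin n, ∏ i, A (σ i) (f i) * B (f i) i := by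
        simp only [det_apply', mul_apply, Finset.prod_univ_sum, Fintype.piFinset_univ]
  _ = ∑ f : Fin p → Fin n, ∑ σ : Equiv.Perm (Fin p),
        ((Equiv.Perm.sign σ : ℤ) : ℝ) * ∏ i, A (σ i) (f i) * B (f i) i := by
        simp only [Finset.mul_sum]; rw [Finset.sum_comm]
  _ = ∑ f : Fin p → Fin n, (∏ i, B (f i) i) * (A.submatrix id f).det := by
        refine Finset.sum_congr rfl fun f _ => ?_
        rw [det_apply', Finset.mul_sum]
        refine Finset.sum_congr rfl fun σ _ => ?_
        simp only [Finset.prod_mul_distrib, submatrix_apply, id_eq]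
        ring


open Matrix Equiv in
private lemma sum_perm_eq {p n : ℕ} (A : Matrix (Fin p) (Fin n) ℝ)
    (B : Matrix (Fin n) (Fin p) ℝ) (S : Finset (Fin n)) (hS : S.card = p) :
    ∑ σ : Equiv.Perm (Fin p),
        (∏ i, B (S.orderEmbOfFin hS (σ i)) i) *
          (A.submatrix id (⇑(S.orderEmbOfFin hS) ∘ ⇑σ)).det
      = colMinor A S * rowMinor B S := by
  have key : ∀ σ : Equiv.Perm (Fin p),
      (A.submatrix id (⇑(S.orderEmbOfFin hS) ∘ ⇑σ)).det
        = ((Equiv.Perm.sign σ : ℤ) : ℝ) * (A.submatrix id ⇑(S.orderEmbOfFin hS)).det := by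
    intro σ
    rw [show A.submatrix id (⇑(S.orderEmbOfFin hS) ∘ ⇑σ)
        = (A.submatrix id ⇑(S.orderEmbOfFin hS)).submatrix id ⇑σ by
      rw [submatrix_submatrix]; rfl]
    rw [det_permute']
  calc ∑ σ : Equiv.Perm (Fin p),
        (∏ i, B (S.orderEmbOfFin hS (σ i)) i) *
          (A.submatrix id (⇑(S.orderEmbOfFin hS) ∘ ⇑σ)).det
      = ∑ σ : Equiv.Perm (Fin p),
          (((Equiv.Perm.sign σ : ℤ) : ℝ) *
            ∏ i, (B.submatrix ⇑(S.orderEmbOfFin hS) id) (σ i) i) *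
            (A.submatrix id ⇑(S.orderEmbOfFin hS)).det := by
        refine Finset.sum_congr rfl fun σ _ => ?_
        rw [key]
        simp only [submatrix_apply, id_eq]
        ring
    _ = (B.submatrix ⇑(S.orderEmbOfFin hS) id).det *
          (A.submatrix id ⇑(S.orderEmbOfFin hS)).det := by
        rw [← Finset.sum_mul, ← det_apply']
    _ = colMinor A S * rowMinor B S := by
        rw [colMinor, rowMinor, dif_pos hS, dif_pos hS, mul_comm]


open Matrix Equiv in
private lemma cauchyBinet {p n : ℕ} (A : Matrix (Fin p) (Fin n) ℝ)
    (B : Matrix (Fin n) (Fin p) ℝ) :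
    (A * B).det = ∑ S ∈ (univ : Finset (Fin n)).powersetCard p,
      colMinor A S * rowMinor B S := by
  classical
  rw [det_mul_expand]
  have h1 : ∑ f : Fin p → Fin n, (∏ i, B (f i) i) * (A.submatrix id f).det
      = ∑ f ∈ univ.filter (fun f : Fin p → Fin n => Function.Injective f),
          (∏ i, B (f i) i) * (A.submatrix id f).det := by
    refine (Finset.sum_subset (filter_subset _ _) fun f _ hf => ?_).symm
    simp only [mem_filter, mem_univ, true_and] at hf
    rw [Function.Injective] at hf; push_neg at hf
    obtain ⟨i, j, hij, hne⟩ := hf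
    have : (A.submatrix id f).det = 0 :=
      det_zero_of_column_eq hne fun r => by simp [submatrix_apply, hij]
    rw [this, mul_zero]
  rw [h1]
  set G : (Σ _ : Finset (Fin n), Equiv.Perm (Fin p)) → ℝ := fun x =>
    if h : x.1.card = p then
      (∏ i, B (x.1.orderEmbOfFin h (x.2 i)) i) *
        (A.submatrix id (⇑(x.1.orderEmbOfFin h) ∘ ⇑x.2)).det
    else 0 with hG
  have h2 : ∑ f ∈ univ.filter (fun f : Fin p → Fin n => Function.Injective f),
      (∏ i, B (f i) i) * (A.submatrix id f).det
      = ∑ x ∈ ((univ : Finset (Fin n)).powersetCard p).sigma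
          (fun _ => (univ : Finset (Equiv.Perm (Fin p)))), G x := by
    refine (Finset.sum_bij
      (fun (x : Σ _ : Finset (Fin n), Equiv.Perm (Fin p)) hx =>
        ⇑(x.1.orderEmbOfFin
          (Finset.mem_powersetCard.mp (Finset.mem_sigma.mp hx).1).2) ∘ ⇑x.2)
      ?_ ?_ ?_ ?_).symm
    · intro x hx
      simp only [mem_filter, mem_univ, true_and]
      exact ((x.1.orderEmbOfFin _).injective.comp x.2.injective)
    · rintro ⟨S₁, σ₁⟩ h₁ ⟨S₂, σ₂⟩ h₂ heq
      have hc₁ := (Finset.mem_powersetCard.mp (Finset.mem_sigma.mp h₁).1).2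
      have hc₂ := (Finset.mem_powersetCard.mp (Finset.mem_sigma.mp h₂).1).2
      have heq' : ⇑(S₁.orderEmbOfFin hc₁) ∘ ⇑σ₁ = ⇑(S₂.orderEmbOfFin hc₂) ∘ ⇑σ₂ := heq
      have hrange : (S₁ : Set (Fin n)) = (S₂ : Set (Fin n)) := by
        rw [← Finset.range_orderEmbOfFin S₁ hc₁, ← Finset.range_orderEmbOfFin S₂ hc₂,
          ← σ₁.surjective.range_comp ⇑(S₁.orderEmbOfFin hc₁),
          ← σ₂.surjective.range_comp ⇑(S₂.orderEmbOfFin hc₂), heq']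
      have hSS : S₁ = S₂ := Finset.coe_injective hrange
      subst hSS
      have hσ : σ₁ = σ₂ := by
        ext i
        have := (S₁.orderEmbOfFin hc₁).injective (congrFun heq' i)
        exact congrArg Fin.val this
      rw [hσ]
    · intro f hf
      simp only [mem_filter, mem_univ, true_and] at hf
      have hcard : (univ.image f).card = p := by
        rw [Finset.card_image_of_injective _ hf, card_univ, Fintype.card_fin]
      have hmem : ∀ i, f i ∈ univ.image f := fun i => Finset.mem_image_of_mem f (mem_univ i)
      have hu_inj : Function.Injective
          (fun i => ((univ.image f).orderIsoOfFin hcard).symm ⟨f i, hmem i⟩) := by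
        intro i j hij
        have h2 := congrArg (fun x => ((((univ.image f).orderIsoOfFin hcard)) x : Fin n)) hij
        simp only [OrderIso.apply_symm_apply] at h2
        exact hf h2
      refine ⟨⟨univ.image f, Equiv.ofBijective _ (Finite.injective_iff_bijective.mp hu_inj)⟩,
        Finset.mem_sigma.mpr ⟨Finset.mem_powersetCard.mpr ⟨subset_univ _, hcard⟩, mem_univ _⟩, ?_⟩
      funext i
      show (univ.image f).orderEmbOfFin _
        (((univ.image f).orderIsoOfFin hcard).symm ⟨f i, hmem i⟩) = f i
      rw [← Finset.coe_orderIsoOfFin_apply, OrderIso.apply_symm_apply]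
    · rintro ⟨S, σ⟩ hx
      have hc := (Finset.mem_powersetCard.mp (Finset.mem_sigma.mp hx).1).2
      rw [hG]
      simp only
      rw [dif_pos hc]
      rfl
  rw [h2, Finset.sum_sigma]
  refine Finset.sum_congr rfl fun S hS => ?_
  have hc := (Finset.mem_powersetCard.mp hS).2
  rw [hG]
  simp only [dif_pos hc]
  exact sum_perm_eq A B S hc

open Matrix Equiv in
private lemma colMinor_fromRows {k m n : ℕ} (C : Matrix (Fin k) (Fin n) ℝ)
    (I : Finset (Fin n)) (hI : I.card = m) (J : Finset (Fin n))
    (hJI : J ⊆ Iᶜ) (hJ : J.card = k) :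
    colMinor ((Matrix.fromRows C
        ((1 : Matrix (Fin n) (Fin n) ℝ).submatrix (⇑(I.orderEmbOfFin hI)) id)).submatrix
        (⇑finSumFinEquiv.symm) id) (J ∪ I)
      = interleavingSign J I * colMinor C J := by
  classical
  have hdisj : Disjoint J I :=
    Finset.disjoint_left.mpr fun a haJ haI => (Finset.mem_compl.mp (hJI haJ)) haI
  have hS : (J ∪ I).card = k + m := by
    rw [Finset.card_union_of_disjoint hdisj, hJ, hI]
  set ι := I.orderEmbOfFin hI with hιdef
  set Jemb := J.orderEmbOfFin hJ with hJembdef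
  set Semb := (J ∪ I).orderEmbOfFin hS with hSembdef
  set g : Fin k ⊕ Fin m → Fin n := Sum.elim ⇑Jemb ⇑ι with hgdef
  have hg_mem : ∀ y, g y ∈ J ∪ I := by
    rintro (a | b)
    · exact Finset.mem_union_left _ (Finset.orderEmbOfFin_mem J hJ a)
    · exact Finset.mem_union_right _ (Finset.orderEmbOfFin_mem I hI b)
  have hJI' : ∀ (a : Fin k) (b : Fin m), Jemb a ≠ ι b := by
    intro a b h
    have h1 : Jemb a ∈ Iᶜ := hJI (Finset.orderEmbOfFin_mem J hJ a)
    have h2 : ι b ∈ I := Finset.orderEmbOfFin_mem I hI b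
    rw [h] at h1
    exact (Finset.mem_compl.mp h1) h2
  have hg_inj : Function.Injective g := by
    rintro (a | b) (a' | b') h
    · exact congrArg Sum.inl (Jemb.injective h)
    · exact absurd h (hJI' a b')
    · exact absurd h.symm (hJI' a' b)
    · exact congrArg Sum.inr (ι.injective h)
  have hg_bij : Function.Bijective (fun y => (⟨g y, hg_mem y⟩ : {x // x ∈ J ∪ I})) := by
    refine (Fintype.bijective_iff_injective_and_card _).mpr ⟨?_, ?_⟩
    · intro y y' h
      exact hg_inj (congrArg Subtype.val h)
    · simp only [Fintype.card_sum, Fintype.card_fin, Fintype.card_coe, hS]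
  set τ : Equiv.Perm (Fin (k + m)) :=
    finSumFinEquiv.symm.trans ((Equiv.ofBijective _ hg_bij).trans
      ((J ∪ I).orderIsoOfFin hS).toEquiv.symm) with hτdef
  have hτ : ∀ c, Semb (τ c) = g (finSumFinEquiv.symm c) := by
    intro c
    show Semb ((((J ∪ I).orderIsoOfFin hS).toEquiv.symm)
      ⟨g (finSumFinEquiv.symm c), hg_mem _⟩) = g (finSumFinEquiv.symm c)
    rw [hSembdef, ← Finset.coe_orderIsoOfFin_apply]
    show ((((J ∪ I).orderIsoOfFin hS) ((((J ∪ I).orderIsoOfFin hS)).symm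
      ⟨g (finSumFinEquiv.symm c), hg_mem _⟩)) : Fin n) = _
    rw [OrderIso.apply_symm_apply]
  have hcase : ∀ x : Σ _ : Fin (k + m), Fin (k + m), x.2 < x.1 → τ x.1 ≤ τ x.2 →
      ∃ (a : Fin k) (b : Fin m),
        finSumFinEquiv.symm x.1 = Sum.inr b ∧ finSumFinEquiv.symm x.2 = Sum.inl a := by
    intro x hx1 hx2
    have hne : τ x.1 ≠ τ x.2 := fun h => (ne_of_lt hx1) (τ.injective h).symm
    have hlt : τ x.1 < τ x.2 := lt_of_le_of_ne hx2 hne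
    have hg : g (finSumFinEquiv.symm x.1) < g (finSumFinEquiv.symm x.2) := by
      rw [← hτ, ← hτ]; exact Semb.strictMono hlt
    have hv1 : x.1 = finSumFinEquiv (finSumFinEquiv.symm x.1) := (Equiv.apply_symm_apply _ _).symm
    have hv2 : x.2 = finSumFinEquiv (finSumFinEquiv.symm x.2) := (Equiv.apply_symm_apply _ _).symm
    rcases h1 : finSumFinEquiv.symm x.1 with a1 | b1 <;>
      rcases h2 : finSumFinEquiv.symm x.2 with a2 | b2
    · exfalso
      rw [h1, h2] at hg
      simp only [hgdef, Sum.elim_inl] at hg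
      have hab : (a1 : ℕ) < (a2 : ℕ) := Jemb.strictMono.lt_iff_lt.mp hg
      rw [h1] at hv1; rw [h2] at hv2
      rw [hv1, hv2] at hx1
      simp only [finSumFinEquiv_apply_left, Fin.lt_def, Fin.coe_castAdd] at hx1
      omega
    · exfalso
      rw [h1] at hv1; rw [h2] at hv2
      rw [hv1, hv2] at hx1
      simp only [finSumFinEquiv_apply_left, finSumFinEquiv_apply_right, Fin.lt_def,
        Fin.coe_castAdd, Fin.coe_natAdd] at hx1
      have := a1.isLt
      omega
    · exact ⟨a2, b1, rfl, rfl⟩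
    · exfalso
      rw [h1, h2] at hg
      simp only [hgdef, Sum.elim_inr] at hg
      have hab : (b1 : ℕ) < (b2 : ℕ) := ι.strictMono.lt_iff_lt.mp hg
      rw [h1] at hv1; rw [h2] at hv2
      rw [hv1, hv2] at hx1
      simp only [finSumFinEquiv_apply_right, Fin.lt_def, Fin.coe_natAdd] at hx1
      omega
  set E := (1 : Matrix (Fin n) (Fin n) ℝ).submatrix (⇑ι) id with hEdef
  set M := (Matrix.fromRows C E).submatrix (⇑finSumFinEquiv.symm) id with hMdef
  set N := (Matrix.fromRows C E).submatrix id g with hNdef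
  have hsub : (M.submatrix id ⇑Semb).submatrix id ⇑τ
      = N.submatrix ⇑finSumFinEquiv.symm ⇑finSumFinEquiv.symm := by
    ext x c
    simp only [hMdef, hNdef, Matrix.submatrix_apply, id_eq, hτ c]
  have hNblock : N = Matrix.fromBlocks (C.submatrix id ⇑Jemb) (C.submatrix id ⇑ι) 0 1 := by
    ext (a | b) (a' | b')
    · simp [hNdef, hgdef]
    · simp [hNdef, hgdef]
    · show E b (g (Sum.inl a')) = 0
      simp only [hgdef, Sum.elim_inl, hEdef, Matrix.submatrix_apply, id_eq, Matrix.one_apply]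
      exact if_neg fun h => hJI' a' b h.symm
    · show E b (g (Sum.inr b')) = (1 : Matrix (Fin m) (Fin m) ℝ) b b'
      simp only [hgdef, Sum.elim_inr, hEdef, Matrix.submatrix_apply, id_eq, Matrix.one_apply,
        ι.injective.eq_iff]
  have hdetN : N.det = colMinor C J := by
    rw [hNblock, Matrix.det_fromBlocks_zero₂₁, Matrix.det_one, mul_one, colMinor, dif_pos hJ]
  have hs : ((Equiv.Perm.sign τ : ℤ) : ℝ) * ((Equiv.Perm.sign τ : ℤ) : ℝ) = 1 := by
    rw [← Int.cast_mul, ← Units.val_mul, Int.units_mul_self, Units.val_one, Int.cast_one]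
  have h1 := Matrix.det_permute' τ (M.submatrix id ⇑Semb)
  rw [hsub, Matrix.det_submatrix_equiv_self finSumFinEquiv.symm N] at h1
  have hdet : colMinor M (J ∪ I) = ((Equiv.Perm.sign τ : ℤ) : ℝ) * colMinor C J := by
    rw [colMinor, dif_pos hS]
    calc (M.submatrix id ⇑Semb).det
        = (((Equiv.Perm.sign τ : ℤ) : ℝ) * ((Equiv.Perm.sign τ : ℤ) : ℝ))
            * (M.submatrix id ⇑Semb).det := by rw [hs, one_mul]
      _ = ((Equiv.Perm.sign τ : ℤ) : ℝ) * N.det := by rw [mul_assoc, ← h1]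
      _ = ((Equiv.Perm.sign τ : ℤ) : ℝ) * colMinor C J := by rw [hdetN]
  rw [hdet]
  congr 1
  rw [sign_cast_eq_pow, interleavingSign]
  congr 1
  refine Finset.card_bij (fun x _ => (Semb (τ x.2), Semb (τ x.1))) ?_ ?_ ?_
  · intro x hx
    rw [Finset.mem_filter] at hx
    have hx1 := Equiv.Perm.mem_finPairsLT.mp hx.1
    obtain ⟨a, b, h1, h2⟩ := hcase x hx1 hx.2
    have e1 : Semb (τ x.1) = ι b := by rw [hτ, h1]; simp [hgdef]
    have e2 : Semb (τ x.2) = Jemb a := by rw [hτ, h2]; simp [hgdef]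
    rw [Finset.mem_filter, Finset.mem_product]
    refine ⟨⟨?_, ?_⟩, ?_⟩
    · show Semb (τ x.2) ∈ J
      rw [e2]; exact Finset.orderEmbOfFin_mem J hJ a
    · show Semb (τ x.1) ∈ I
      rw [e1]; exact Finset.orderEmbOfFin_mem I hI b
    · show Semb (τ x.1) < Semb (τ x.2)
      have hne : τ x.1 ≠ τ x.2 := fun h => (ne_of_lt hx1) (τ.injective h).symm
      exact Semb.strictMono (lt_of_le_of_ne hx.2 hne)
  · rintro ⟨x1, x2⟩ _ ⟨y1, y2⟩ _ h
    simp only [Prod.mk.injEq] at h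
    have e2 : x2 = y2 := τ.injective (Semb.injective h.1)
    have e1 : x1 = y1 := τ.injective (Semb.injective h.2)
    subst e1; subst e2; rfl
  · rintro ⟨j, i⟩ hp
    rw [Finset.mem_filter, Finset.mem_product] at hp
    obtain ⟨⟨hjJ, hiI⟩, hij⟩ := hp
    have hij' : i < j := hij
    have hja : Jemb ((J.orderIsoOfFin hJ).symm ⟨j, hjJ⟩) = j := by
      rw [hJembdef, ← Finset.coe_orderIsoOfFin_apply, OrderIso.apply_symm_apply]
    have hib : ι ((I.orderIsoOfFin hI).symm ⟨i, hiI⟩) = i := by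
      rw [hιdef, ← Finset.coe_orderIsoOfFin_apply, OrderIso.apply_symm_apply]
    set a : Fin k := (J.orderIsoOfFin hJ).symm ⟨j, hjJ⟩
    set b : Fin m := (I.orderIsoOfFin hI).symm ⟨i, hiI⟩
    have eI : Semb (τ (finSumFinEquiv (Sum.inr b))) = i := by
      rw [hτ, Equiv.symm_apply_apply]
      simpa [hgdef] using hib
    have eJ : Semb (τ (finSumFinEquiv (Sum.inl a))) = j := by
      rw [hτ, Equiv.symm_apply_apply]
      simpa [hgdef] using hja
    refine ⟨⟨finSumFinEquiv (Sum.inr b), finSumFinEquiv (Sum.inl a)⟩, ?_, ?_⟩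
    · rw [Finset.mem_filter]
      constructor
      · rw [Equiv.Perm.mem_finPairsLT]
        show finSumFinEquiv (Sum.inl a) < finSumFinEquiv (Sum.inr b)
        simp only [finSumFinEquiv_apply_left, finSumFinEquiv_apply_right, Fin.lt_def,
          Fin.coe_castAdd, Fin.coe_natAdd]
        have := a.isLt
        omega
      · show τ _ ≤ τ _
        have hlt : Semb (τ (finSumFinEquiv (Sum.inr b)))
            < Semb (τ (finSumFinEquiv (Sum.inl a))) := by
          rw [eI, eJ]; exact hij'
        exact le_of_lt (Semb.strictMono.lt_iff_lt.mp hlt)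
    · show (Semb (τ (finSumFinEquiv (Sum.inl a))), Semb (τ (finSumFinEquiv (Sum.inr b)))) = (j, i)
      rw [eI, eJ]

/-- Cauchy–Binet expansion of twistor coordinates. -/
theorem cauchyBinet_twistor (k m n : ℕ) (hk : 0 < k) (hm : 0 < m) (hn : k + m ≤ n)
    (C : Matrix (Fin k) (Fin n) ℝ) (Z : Matrix (Fin n) (Fin (k + m)) ℝ)
    (I : Finset (Fin n)) (hI : I.card = m) :
    twistor C Z I =
      ∑ J ∈ Iᶜ.powersetCard k,
        interleavingSign J I * colMinor C J * rowMinor Z (J ∪ I) := by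
  classical
  set A : Matrix (Fin (k + m)) (Fin n) ℝ :=
    (Matrix.fromRows C
      ((1 : Matrix (Fin n) (Fin n) ℝ).submatrix (⇑(I.orderEmbOfFin hI)) id)).submatrix
      (⇑finSumFinEquiv.symm) id with hA
  have hAZ : A * Z
      = (Matrix.fromRows (C * Z) (Z.submatrix (⇑(I.orderEmbOfFin hI)) id)).submatrix
          (⇑finSumFinEquiv.symm) id := by
    ext x c
    rcases h : finSumFinEquiv.symm x with a | b
    · simp [hA, Matrix.mul_apply, h]
    · simp [hA, Matrix.mul_apply, h, Matrix.one_apply, ite_mul, Finset.sum_ite_eq]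
  have ht : twistor C Z I = (A * Z).det := by
    rw [twistor, dif_pos hI, hAZ]
  rw [ht, cauchyBinet]
  rw [← Finset.sum_filter_add_sum_filter_not ((univ : Finset (Fin n)).powersetCard (k + m))
    (fun S => I ⊆ S)]
  have hzero : ∑ S ∈ (((univ : Finset (Fin n)).powersetCard (k + m)).filter fun S => ¬I ⊆ S),
      colMinor A S * rowMinor Z S = 0 := by
    refine Finset.sum_eq_zero fun S hS => ?_
    rw [Finset.mem_filter] at hS
    have hc := (Finset.mem_powersetCard.mp hS.1).2
    obtain ⟨i, hiI, hiS⟩ := Finset.not_subset.mp hS.2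
    have hib : (I.orderEmbOfFin hI) ((I.orderIsoOfFin hI).symm ⟨i, hiI⟩) = i := by
      rw [← Finset.coe_orderIsoOfFin_apply, OrderIso.apply_symm_apply]
    have hz : colMinor A S = 0 := by
      rw [colMinor, dif_pos hc]
      refine Matrix.det_eq_zero_of_row_eq_zero
        (finSumFinEquiv (Sum.inr ((I.orderIsoOfFin hI).symm ⟨i, hiI⟩))) fun j => ?_
      simp only [hA, Matrix.submatrix_apply, id_eq, Equiv.symm_apply_apply,
        Matrix.fromRows_apply_inr]
      rw [Matrix.one_apply, if_neg]
      rw [hib]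
      exact fun h => hiS (h ▸ Finset.orderEmbOfFin_mem S hc j)
    rw [hz, zero_mul]
  rw [hzero, add_zero]
  refine Finset.sum_nbij' (fun S => S \ I) (fun J => J ∪ I) ?_ ?_ ?_ ?_ ?_
  · intro S hS
    rw [Finset.mem_filter] at hS
    have hc := (Finset.mem_powersetCard.mp hS.1).2
    refine Finset.mem_powersetCard.mpr ⟨?_, ?_⟩
    · intro a ha
      rw [Finset.mem_sdiff] at ha
      exact Finset.mem_compl.mpr ha.2
    · rw [Finset.card_sdiff_of_subset hS.2, hc, hI]; omega
  · intro J hJ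
    rw [Finset.mem_powersetCard] at hJ
    have hdisj : Disjoint J I :=
      Finset.disjoint_left.mpr fun a haJ haI => (Finset.mem_compl.mp (hJ.1 haJ)) haI
    refine Finset.mem_filter.mpr ⟨Finset.mem_powersetCard.mpr ⟨subset_univ _, ?_⟩,
      Finset.subset_union_right⟩
    rw [Finset.card_union_of_disjoint hdisj, hJ.2, hI]
  · intro S hS
    rw [Finset.mem_filter] at hS
    exact Finset.sdiff_union_of_subset hS.2
  · intro J hJ
    rw [Finset.mem_powersetCard] at hJ
    have hdisj : Disjoint J I :=
      Finset.disjoint_left.mpr fun a haJ haI => (Finset.mem_compl.mp (hJ.1 haJ)) haI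
    show (J ∪ I) \ I = J
    rw [Finset.union_sdiff_distrib, Finset.sdiff_self, Finset.union_empty,
      Finset.sdiff_eq_self_of_disjoint hdisj]
  · intro S hS
    rw [Finset.mem_filter] at hS
    have hc := (Finset.mem_powersetCard.mp hS.1).2
    have hJIc : S \ I ⊆ Iᶜ := fun a ha => Finset.mem_compl.mpr (Finset.mem_sdiff.mp ha).2
    have hJcard : (S \ I).card = k := by rw [Finset.card_sdiff_of_subset hS.2, hc, hI]; omega
    have hun : S \ I ∪ I = S := Finset.sdiff_union_of_subset hS.2
    have hcm : colMinor A S = interleavingSign (S \ I) I * colMinor C (S \ I) := by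
      conv_lhs => rw [← hun]
      exact colMinor_fromRows C I hI (S \ I) hJIc hJcard
    show colMinor A S * rowMinor Z S
      = interleavingSign (S \ I) I * colMinor C (S \ I) * rowMinor Z (S \ I ∪ I)
    rw [hun, hcm]
end

section
/- Nonvanishing twistor coordinates force coindependence: let k, m, n be positive integers with k + m ≤ n, let C be a real k×n matrix, Z a real n×(k+m) matrix, and I = {i_1 < … < i_m} ⊆ {1,…,n}. If the twistor coordinate ⟪I⟫_{C,Z} is nonzero, then I is coindependent for C, i.e. there exists a k-element subset J ⊆ {1,…,n}∖I with ⟨J⟩_C ≠ 0. -/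
open Finset

/-- A nonvanishing twistor coordinate `⟪I⟫_{C,Z}` forces `I` to be coindependent for `C`:
there is a `k`-element subset `J` of `{1, …, n} ∖ I` with `⟨J⟩_C ≠ 0`. -/
theorem twistor_ne_zero_coindependent (k m n : ℕ) (hk : 0 < k) (hm : 0 < m)
    (hn : k + m ≤ n) (C : Matrix (Fin k) (Fin n) ℝ)
    (Z : Matrix (Fin n) (Fin (k + m)) ℝ) (I : Finset (Fin n)) (hI : I.card = m)
    (h : twistor C Z I ≠ 0) :
    ∃ J : Finset (Fin n), J.card = k ∧ Disjoint J I ∧ colMinor C J ≠ 0 := by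
  classical
  rw [twistor, dif_pos hI] at h
  set emb := I.orderEmbOfFin hI with hemb
  set B := ((Matrix.fromRows (C * Z) (Z.submatrix ⇑emb id)).submatrix ⇑finSumFinEquiv.symm id)
    with hB
  -- Key: if v ᵥ* C vanishes off I, then v = 0.
  have hinj : ∀ v : Fin k → ℝ, (∀ j : Fin n, j ∉ I → Matrix.vecMul v C j = 0) → v = 0 := by
    intro v hv
    have hBu : IsUnit B := (Matrix.isUnit_iff_isUnit_det B).2 (isUnit_iff_ne_zero.2 h)
    have hvm : Function.Injective B.vecMul := Matrix.vecMul_injective_iff_isUnit.2 hBu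
    set c := Matrix.vecMul v C with hc
    set w : Fin (k + m) → ℝ :=
      fun p => Sum.elim v (fun b => -(c (emb b))) (finSumFinEquiv.symm p) with hw
    have hwB : Matrix.vecMul w B = 0 := by
      funext j
      have key : ∀ j, Matrix.vecMul w B j =
          (∑ a : Fin k, v a * (C * Z) a j) + ∑ b : Fin m, (-(c (emb b))) * Z (emb b) j := by
        intro j
        rw [Matrix.vecMul, dotProduct]
        rw [← Fintype.sum_equiv finSumFinEquiv
          (fun s => w (finSumFinEquiv s) * B (finSumFinEquiv s) j)
          (fun p => w p * B p j) (fun s => rfl)]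
        rw [Fintype.sum_sum_type]
        congr 1
        · refine Finset.sum_congr rfl fun a _ => ?_
          simp [hw, hB, Matrix.submatrix_apply]
        · refine Finset.sum_congr rfl fun b _ => ?_
          simp [hw, hB, Matrix.submatrix_apply]
      have h1 : (∑ a : Fin k, v a * (C * Z) a j) = ∑ i : Fin n, c i * Z i j := by
        have : (∑ a : Fin k, v a * (C * Z) a j) = Matrix.vecMul v (C * Z) j := by
          rw [Matrix.vecMul, dotProduct]
        rw [this, ← Matrix.vecMul_vecMul, ← hc, Matrix.vecMul, dotProduct]
      have h2 : (∑ i : Fin n, c i * Z i j) = ∑ b : Fin m, c (emb b) * Z (emb b) j := by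
        rw [← Finset.sum_subset (Finset.subset_univ I)
          (fun x _ hx => by rw [hv x hx, zero_mul])]
        refine (Finset.sum_bij (fun (b : Fin m) _ => emb b) (fun b _ => I.orderEmbOfFin_mem hI b)
          (fun a _ b _ hab => emb.injective hab) ?_ (fun b _ => rfl)).symm
        intro i hi
        have : i ∈ Set.range emb := by rw [hemb, I.range_orderEmbOfFin hI]; exact hi
        obtain ⟨b, hb⟩ := this
        exact ⟨b, Finset.mem_univ b, hb⟩
      have := key j
      rw [h1, h2] at this
      rw [this]
      simp [Pi.zero_apply, ← Finset.sum_add_distrib]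
    have hw0 : w = 0 := hvm (by show Matrix.vecMul w B = Matrix.vecMul 0 B; rw [hwB, Matrix.zero_vecMul])
    funext a
    have := congrFun hw0 (finSumFinEquiv (Sum.inl a))
    simpa [hw] using this
  -- The rows of C restricted to columns off I are linearly independent.
  set D : Matrix (Fin k) {j : Fin n // j ∉ I} ℝ := fun i j => C i j.val with hD
  have hrows : LinearIndependent ℝ (fun i : Fin k => D i) := by
    rw [Fintype.linearIndependent_iff]
    intro g hg
    have hg' : ∀ j : Fin n, j ∉ I → Matrix.vecMul g C j = 0 := by
      intro j hj
      have := congrFun hg ⟨j, hj⟩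
      simpa [Matrix.vecMul, dotProduct, hD] using this
    have := hinj g hg'
    intro i; rw [this]; rfl
  -- Hence the columns of D span ℝ^k.
  have hrank : D.rank = k := by
    rw [hrows.rank_matrix, Fintype.card_fin]
  have hspan : Submodule.span ℝ (Set.range D.transpose) = ⊤ := by
    apply Submodule.eq_top_of_finrank_eq
    rw [← show D.col = D.transpose from rfl, ← Matrix.rank_eq_finrank_span_cols, hrank]
    simp [Module.finrank_fintype_fun_eq_card]
  -- Extract a linearly independent spanning subset of the columns.
  obtain ⟨t, hts, htspan, htli⟩ := exists_linearIndependent ℝ (Set.range D.transpose)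
  rw [hspan] at htspan
  have htfin : t.Finite := htli.setFinite
  haveI : Fintype t := htfin.fintype
  have hbasis : Module.finrank ℝ (Fin k → ℝ) = Fintype.card t := by
    have b : Module.Basis t ℝ (Fin k → ℝ) := Module.Basis.mk htli (by rw [Subtype.range_coe]; exact htspan.ge)
    exact Module.finrank_eq_card_basis b
  have htcard : Fintype.card t = k := by
    rw [← hbasis]; simp [Module.finrank_fintype_fun_eq_card]
  -- Choose a column index for each element of t.
  have hchoice : ∀ x : t, ∃ j : ({j : Fin n // j ∉ I}), D.transpose j = (x : Fin k → ℝ) :=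
    fun x => hts x.2
  choose f hf using hchoice
  have hfinj : Function.Injective f := by
    intro x y hxy
    have : (x : Fin k → ℝ) = y := by rw [← hf x, ← hf y, hxy]
    exact Subtype.ext this
  set J : Finset (Fin n) := Finset.univ.image (fun x : t => (f x).val) with hJ
  have hJcard : J.card = k := by
    rw [hJ, Finset.card_image_of_injective _ (fun a b hab => hfinj (Subtype.ext hab)),
      Finset.card_univ, htcard]
  have hJdisj : Disjoint J I := by
    rw [Finset.disjoint_left]
    intro j hj hjI
    rw [hJ, Finset.mem_image] at hj
    obtain ⟨x, _, hx⟩ := hj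
    exact (f x).2 (hx ▸ hjI)
  refine ⟨J, hJcard, hJdisj, ?_⟩
  rw [colMinor, dif_pos hJcard]
  set g := J.orderEmbOfFin hJcard with hg
  -- each column of the minor is an element of t
  have hcol : ∀ a : Fin k, ∃ x : t, (f x).val = g a ∧
      (fun i => C i (g a)) = (x : Fin k → ℝ) := by
    intro a
    have : g a ∈ J := J.orderEmbOfFin_mem hJcard a
    rw [hJ, Finset.mem_image] at this
    obtain ⟨x, _, hx⟩ := this
    refine ⟨x, hx, ?_⟩
    rw [← hf x]
    funext i
    simp [hD, Matrix.transpose_apply, hx]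
    exact congrArg (C i) hx.symm
  choose φ hφ1 hφ2 using hcol
  have hφinj : Function.Injective φ := by
    intro a b hab
    apply g.injective
    rw [← hφ1 a, ← hφ1 b, hab]
  have hcols : LinearIndependent ℝ (fun a : Fin k => (C.submatrix id ⇑g).transpose a) := by
    have : (fun a : Fin k => (C.submatrix id ⇑g).transpose a) = (fun x : t => (x : Fin k → ℝ)) ∘ φ := by
      funext a
      have := hφ2 a
      funext i
      simp only [Matrix.transpose_apply, Matrix.submatrix_apply, id_eq, Function.comp_apply]
      exact congrFun this i
    rw [this]
    exact htli.comp φ hφinj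
  have : IsUnit (C.submatrix id ⇑g) := Matrix.linearIndependent_cols_iff_isUnit.1 hcols
  exact ((Matrix.isUnit_iff_isUnit_det _).1 this).ne_zero
end

section
/- Row support forces vanishing of a twistor coordinate: let k, m, n be positive integers with k + m ≤ n, let C be a real k×n matrix, and let I ⊆ {1,…,n} with |I| = m. If some row of C has all of its nonzero entries in columns indexed by I (i.e. its support is contained in I), then ⟪I⟫_{C,Z} = 0 for every real n×(k+m) matrix Z. -/
open Finset

/-- If some row of `C` has its support contained in the column set `I`, then the
twistor coordinate `⟪I⟫_{C,Z}` vanishes for every `Z`. -/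
theorem twistor_eq_zero_of_row_support (k m n : ℕ) (hk : 0 < k) (hm : 0 < m)
    (hn : k + m ≤ n) (C : Matrix (Fin k) (Fin n) ℝ)
    (I : Finset (Fin n)) (hI : I.card = m)
    (r : Fin k) (hsupp : ∀ j : Fin n, C r j ≠ 0 → j ∈ I) :
    ∀ Z : Matrix (Fin n) (Fin (k + m)) ℝ, twistor C Z I = 0 := by
  intro Z
  unfold twistor
  rw [dif_pos hI]
  set e := I.orderEmbOfFin hI with he
  set M : Matrix (Sum (Fin k) (Fin m)) (Fin (k + m)) ℝ :=
    Matrix.fromRows (C * Z) (Z.submatrix ⇑e id) with hM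
  set N : Matrix (Sum (Fin k) (Fin m)) (Sum (Fin k) (Fin m)) ℝ :=
    M.submatrix id ⇑finSumFinEquiv with hN
  have hMN : M.submatrix ⇑finSumFinEquiv.symm id
      = N.submatrix ⇑finSumFinEquiv.symm ⇑finSumFinEquiv.symm := by
    funext p q
    simp [hN, Matrix.submatrix_apply]
  rw [hMN, Matrix.det_submatrix_equiv_self]
  -- now show det N = 0 using a vanishing left-kernel vector
  rw [← Matrix.exists_vecMul_eq_zero_iff]
  refine ⟨Sum.elim (fun i => if i = r then (1:ℝ) else 0) (fun i => -(C r (e i))), ?_, ?_⟩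
  · intro h
    have := congrFun h (Sum.inl r)
    simp at this
  · funext j
    have hrow : ∀ i : Fin m, N (Sum.inr i) j = Z (e i) (finSumFinEquiv j) := fun i => rfl
    have hCZ : N (Sum.inl r) j = ∑ i : Fin m, C r (e i) * Z (e i) (finSumFinEquiv j) := by
      show (C * Z) r (finSumFinEquiv j) = _
      rw [Matrix.mul_apply]
      rw [← Finset.sum_subset (Finset.subset_univ I) (by
        intro t _ ht
        have : C r t = 0 := by
          by_contra hc
          exact ht (hsupp t hc)
        simp [this])]
      rw [← Finset.sum_attach I (fun t => C r t * Z t (finSumFinEquiv j))]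
      exact (Fintype.sum_equiv (I.orderIsoOfFin hI).toEquiv _
        (fun t : I => C r (t : Fin n) * Z (t : Fin n) (finSumFinEquiv j)) (fun i => rfl)).symm
    have hvm : Matrix.vecMul (Sum.elim (fun i => if i = r then (1:ℝ) else 0)
        (fun i => -(C r (e i)))) N j
        = ∑ p : Sum (Fin k) (Fin m), Sum.elim (fun i => if i = r then (1:ℝ) else 0)
          (fun i => -(C r (e i))) p * N p j := rfl
    rw [hvm, Fintype.sum_sum_type]
    simp only [Sum.elim_inl, Sum.elim_inr]
    rw [Finset.sum_eq_single r (by intro b _ hb; simp [hb]) (by simp), if_pos rfl, one_mul,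
      hCZ]
    simp only [hrow, neg_mul]
    rw [Pi.zero_apply, ← Finset.sum_add_distrib]
    simp
end

section
/- The cyclic shift acts on Plücker coordinates by cyclic index shift and preserves total nonnegativity: let k ≤ n and let C be a real k×n matrix with columns v_1,…,v_n. Define cyc(C) to be the k×n matrix whose j-th column is v_{j+1} for 1 ≤ j ≤ n−1 and whose n-th column is (−1)^{k−1}·v_1. Then for every k-element subset I ⊆ {1,…,n}, ⟨I⟩_{cyc(C)} = ⟨σ(I)⟩_C, where σ(i) = i+1 for i < n and σ(n) = 1 (and σ(I) is taken in increasing order). In particular, if C is totally nonnegative (respectively, all ⟨J⟩_C > 0) then so is cyc(C). -/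
open Finset

/-- The cyclic shift of a `k × n` matrix: the `j`-th column of `cyc C` is the
`(j+1)`-st column of `C` for `j < n`, and the last column of `cyc C` is
`(-1)^(k-1)` times the first column of `C`.  (In `0`-based indexing, the `j`-th
column of `cyc C` is the column of `C` indexed by `finRotate n j = j + 1 (mod n)`,
with the sign `(-1)^(k-1)` appearing exactly on the last column.) -/
noncomputable def cyc {k n : ℕ} (C : Matrix (Fin k) (Fin n) ℝ) :
    Matrix (Fin k) (Fin n) ℝ :=
  Matrix.of fun i j =>
    (if (j : ℕ) + 1 = n then (-1 : ℝ) ^ (k - 1) else 1) * C i (finRotate n j)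

lemma cyc_minor_key {k n : ℕ} (C : Matrix (Fin k) (Fin n) ℝ)
    (I : Finset (Fin n)) (h : I.card = k) :
    colMinor (cyc C) I = colMinor C (I.image ⇑(finRotate n)) := by
  have hinj : Function.Injective ⇑(finRotate n) := (finRotate n).injective
  have h' : (I.image ⇑(finRotate n)).card = k := by
    rw [Finset.card_image_of_injective _ hinj, h]
  rw [colMinor, colMinor, dif_pos h, dif_pos h']
  rcases Nat.eq_zero_or_pos k with hk | hk
  · subst hk; simp [Matrix.det_fin_zero]
  obtain ⟨m, rfl⟩ : ∃ m, k = m + 1 := ⟨k - 1, by omega⟩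
  obtain ⟨n', rfl⟩ : ∃ n', n = n' + 1 := by
    rcases n with _ | n'
    · exact absurd (h ▸ Finset.card_le_card (Finset.subset_univ I)) (by simp)
    · exact ⟨n', rfl⟩
  set e := I.orderEmbOfFin h with he
  set I' := I.image ⇑(finRotate (n' + 1)) with hI'
  set e' := I'.orderEmbOfFin h' with he'
  by_cases hlast : Fin.last n' ∈ I
  · -- case B: last ∈ I
    have hemax : e (Fin.last m) = Fin.last n' := by
      have : e ⟨(m+1) - 1, Nat.sub_lt hk (Nat.succ_pos 0)⟩ = I.max' _ :=
        Finset.orderEmbOfFin_last h hk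
      have hmax : I.max' (Finset.card_pos.mp (h.symm ▸ hk)) = Fin.last n' :=
        le_antisymm (Fin.le_last _) (Finset.le_max' _ _ hlast)
      simpa [Fin.last, hmax] using this
    set σ : Equiv.Perm (Fin (m + 1)) := finRotate (m + 1) with hσ
    have hlt : ∀ i : Fin m, (e i.castSucc : ℕ) < n' := by
      intro i
      have : e i.castSucc < e (Fin.last m) :=
        (I.orderEmbOfFin h).strictMono (Fin.castSucc_lt_last i)
      rw [hemax] at this
      simpa [Fin.lt_iff_val_lt_val] using this
    have hg : (fun i => finRotate (n' + 1) (e (σ.symm i))) = ⇑e' := by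
      apply Finset.orderEmbOfFin_unique h'
      · intro x
        exact Finset.mem_image_of_mem _ (Finset.orderEmbOfFin_mem I h _)
      · -- strict mono
        have hval : ∀ i : Fin (m + 1),
            ((finRotate (n' + 1) (e (σ.symm i)) : Fin (n'+1)) : ℕ) =
              if hi : i = 0 then 0 else (e (σ.symm i) : ℕ) + 1 := by
          intro i
          rcases Fin.eq_zero_or_eq_succ i with rfl | ⟨j, rfl⟩
          · have : σ.symm 0 = Fin.last m := by
              rw [Equiv.symm_apply_eq, hσ, finRotate_succ_apply]
              simp
            rw [this, hemax, finRotate_last]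
            simp
          · have hs : σ.symm j.succ = j.castSucc := by
              rw [Equiv.symm_apply_eq, hσ, finRotate_succ_apply, Fin.coeSucc_eq_succ]
            rw [hs, dif_neg (Fin.succ_ne_zero j)]
            have hfr : finRotate (n' + 1) ⟨(e j.castSucc : ℕ), by have := hlt j; omega⟩ =
                ⟨(e j.castSucc : ℕ) + 1, by have := hlt j; omega⟩ := finRotate_of_lt (hlt j)
            have := congrArg Fin.val hfr
            simpa using this
        intro i j hij
        rw [Fin.lt_iff_val_lt_val, hval i, hval j]
        have hj0 : j ≠ 0 := by
          intro hj; subst hj; exact absurd hij (by simp [Fin.lt_iff_val_lt_val])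
        rw [dif_neg hj0]
        rcases Fin.eq_zero_or_eq_succ i with rfl | ⟨i', rfl⟩
        · simp
        · rw [dif_neg (Fin.succ_ne_zero i')]
          rcases Fin.eq_zero_or_eq_succ j with rfl | ⟨j', rfl⟩
          · exact absurd rfl hj0
          have hs : ∀ a : Fin m, σ.symm a.succ = a.castSucc := by
            intro a
            rw [Equiv.symm_apply_eq, hσ, finRotate_succ_apply, Fin.coeSucc_eq_succ]
          rw [hs, hs]
          have hcc : i'.castSucc < j'.castSucc :=
            Fin.castSucc_lt_castSucc_iff.mpr (Fin.succ_lt_succ_iff.mp hij)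
          have hm := Fin.lt_iff_val_lt_val.mp (e.strictMono hcc)
          omega
    have hcomp : ∀ j : Fin (m + 1), finRotate (n' + 1) (e j) = e' (σ j) := by
      intro j
      have := congrFun hg (σ j)
      simpa using this
    have hεe : ∀ j : Fin (m + 1), ((e j : ℕ) + 1 = n' + 1) ↔ j = Fin.last m := by
      intro j
      constructor
      · intro hj
        have : e j = Fin.last n' := by ext; simpa using hj
        exact (I.orderEmbOfFin h).injective (by rw [this, hemax])
      · intro hj; subst hj; rw [hemax]; simp
    have hsub : ((cyc C).submatrix id ⇑e) =
        Matrix.of (fun i j => (if j = Fin.last m then (-1:ℝ)^m else 1) *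
          ((C.submatrix id ⇑e').submatrix id ⇑σ) i j) := by
      ext i j
      simp only [Matrix.submatrix_apply, id, cyc, Matrix.of_apply]
      rw [hcomp j]
      congr 1
      by_cases hj : j = Fin.last m
      · rw [if_pos ((hεe j).mpr hj), if_pos hj]; simp
      · rw [if_neg (fun hc => hj ((hεe j).mp hc)), if_neg hj]
    rw [hsub, Matrix.det_mul_row]
    have hprod : (∏ j : Fin (m+1), (if j = Fin.last m then (-1:ℝ)^m else 1)) = (-1:ℝ)^m := by
      rw [Finset.prod_ite_eq' Finset.univ (Fin.last m) (fun _ => (-1:ℝ)^m)]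
      simp
    rw [hprod]
    rw [Matrix.det_permute' σ]
    have hsign : ((Equiv.Perm.sign σ : ℤˣ) : ℝ) = (-1:ℝ)^m := by
      rw [hσ, sign_finRotate]; simp
    rw [hsign, ← mul_assoc, ← pow_add, Even.neg_one_pow ⟨m, rfl⟩, one_mul]
  · -- case A: last ∉ I
    have hne : ∀ j : Fin (m+1), (e j : ℕ) < n' := by
      intro j
      have hmem := Finset.orderEmbOfFin_mem I h j
      have hne' : e j ≠ Fin.last n' := fun hc => hlast (hc ▸ hmem)
      have hlt' := (e j).isLt
      have hne'' : (e j : ℕ) ≠ n' := fun hc => hne' (by ext; simpa using hc)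
      omega
    have hg : (fun j => finRotate (n' + 1) (e j)) = ⇑e' := by
      apply Finset.orderEmbOfFin_unique h'
      · intro x; exact Finset.mem_image_of_mem _ (Finset.orderEmbOfFin_mem I h _)
      · intro i j hij
        have h1 : finRotate (n' + 1) ⟨(e i : ℕ), by have := hne i; omega⟩ =
            ⟨(e i : ℕ) + 1, by have := hne i; omega⟩ := finRotate_of_lt (hne i)
        have h2 : finRotate (n' + 1) ⟨(e j : ℕ), by have := hne j; omega⟩ =
            ⟨(e j : ℕ) + 1, by have := hne j; omega⟩ := finRotate_of_lt (hne j)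
        have := Fin.lt_iff_val_lt_val.mp (e.strictMono hij)
        rw [Fin.lt_iff_val_lt_val]
        have e1 := congrArg Fin.val h1
        have e2 := congrArg Fin.val h2
        simp at e1 e2
        show ((finRotate (n' + 1)) (e i) : ℕ) < ((finRotate (n' + 1)) (e j) : ℕ)
        simp only [finRotate_succ_apply]
        rw [e1, e2]
        have := Fin.lt_iff_val_lt_val.mp this
        omega
    congr 1
    ext i j
    simp only [Matrix.submatrix_apply, id, cyc, Matrix.of_apply]
    rw [if_neg (by have := hne j; omega), one_mul, ← hg]


/-- The cyclic shift acts on Plücker coordinates by the cyclic index shift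
`σ = finRotate n` (`σ i = i + 1 (mod n)`), and hence preserves total nonnegativity
and total positivity of the maximal minors. -/
theorem cyc_plucker (k n : ℕ) (hkn : k ≤ n) (C : Matrix (Fin k) (Fin n) ℝ) :
    (∀ I : Finset (Fin n), I.card = k →
        colMinor (cyc C) I = colMinor C (I.image ⇑(finRotate n))) ∧
    ((∀ J : Finset (Fin n), J.card = k → 0 ≤ colMinor C J) →
        ∀ J : Finset (Fin n), J.card = k → 0 ≤ colMinor (cyc C) J) ∧
    ((∀ J : Finset (Fin n), J.card = k → 0 < colMinor C J) →
        ∀ J : Finset (Fin n), J.card = k → 0 < colMinor (cyc C) J) := by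
  refine ⟨fun I hI => cyc_minor_key C I hI, ?_, ?_⟩
  · intro hC J hJ
    rw [cyc_minor_key C J hJ]
    exact hC _ (by rw [Finset.card_image_of_injective _ (finRotate n).injective, hJ])
  · intro hC J hJ
    rw [cyc_minor_key C J hJ]
    exact hC _ (by rw [Finset.card_image_of_injective _ (finRotate n).injective, hJ])
end

section
/- Every nonzero vector in the row span of a matrix in the spurion cell has support of size at least 6: if C ∈ S_sp ⊆ Mat_{2,9}(ℝ), then every nonzero real linear combination of the two rows of C has at least 6 nonzero coordinates. (Consequently, no point of S_sp admits a matrix representative with a row of support of size 5, which is the property characterizing the paper's BCFW cells; hence S_sp is not a BCFW cell.) -/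
open Finset

/-- The `2 × 2` minor `⟨{i,j}⟩_C` of a `2 × 9` matrix on columns `i` and `j`. -/
noncomputable def minor2 (C : Matrix (Fin 2) (Fin 9) ℝ) (i j : Fin 9) : ℝ :=
  C 0 i * C 1 j - C 0 j * C 1 i

/-- The spurion cell `S_sp ⊆ Mat_{2,9}(ℝ)`: the `2 × 2` minor on columns `i < j`
vanishes when `i` and `j` lie in the same block of `{1,2,3}, {4,5,6}, {7,8,9}`
(`0`-based: blocks of `⌊·/3⌋`), and is strictly positive when they lie in
different blocks. -/
def SpurionCell (C : Matrix (Fin 2) (Fin 9) ℝ) : Prop :=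
  ∀ i j : Fin 9, i < j →
    (((i : ℕ) / 3 = (j : ℕ) / 3 → minor2 C i j = 0) ∧
     ((i : ℕ) / 3 ≠ (j : ℕ) / 3 → 0 < minor2 C i j))

lemma vecMul_apply2 (C : Matrix (Fin 2) (Fin 9) ℝ) (c : Fin 2 → ℝ) (j : Fin 9) :
    Matrix.vecMul c C j = c 0 * C 0 j + c 1 * C 1 j := by
  simp [Matrix.vecMul, dotProduct, Fin.sum_univ_two]

/-- Every nonzero vector in the row span of a matrix in the spurion cell has
support of size at least `6`. -/
theorem spurion_row_support (C : Matrix (Fin 2) (Fin 9) ℝ) (hC : SpurionCell C)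
    (c : Fin 2 → ℝ) (h : Matrix.vecMul c C ≠ 0) :
    6 ≤ (Finset.univ.filter fun j => Matrix.vecMul c C j ≠ 0).card := by
  set v := Matrix.vecMul c C with hv
  set Z : Finset (Fin 9) := Finset.univ.filter (fun j => v j = 0) with hZ
  -- if v vanishes on two columns with nonzero minor, then c = 0, so v = 0
  have key : ∀ i j : Fin 9, v i = 0 → v j = 0 → minor2 C i j ≠ 0 → False := by
    intro i j hi hj hm
    rw [hv, vecMul_apply2] at hi hj
    have hc0 : c 0 = 0 := by
      have : c 0 * minor2 C i j = 0 := by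
        unfold minor2; linear_combination C 1 j * hi - C 1 i * hj
      rcases mul_eq_zero.1 this with h0 | h0
      · exact h0
      · exact absurd h0 hm
    have hc1 : c 1 = 0 := by
      have : c 1 * minor2 C i j = 0 := by
        unfold minor2; linear_combination C 0 i * hj - C 0 j * hi
      rcases mul_eq_zero.1 this with h0 | h0
      · exact h0
      · exact absurd h0 hm
    apply h
    funext k
    rw [hv, vecMul_apply2, hc0, hc1]
    simp
  -- any two elements of Z lie in the same block
  have same_block : ∀ i j : Fin 9, i ∈ Z → j ∈ Z → (i : ℕ) / 3 = (j : ℕ) / 3 := by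
    intro i j hi hj
    simp only [hZ, Finset.mem_filter] at hi hj
    by_contra hne
    rcases lt_trichotomy i j with hlt | heq | hgt
    · exact key i j hi.2 hj.2 (ne_of_gt ((hC i j hlt).2 hne))
    · exact hne (by rw [heq])
    · exact key j i hj.2 hi.2 (ne_of_gt ((hC j i hgt).2 (Ne.symm hne)))
  have hZcard : Z.card ≤ 3 := by
    rcases Z.eq_empty_or_nonempty with he | ⟨i, hi⟩
    · simp [he]
    · have hsub : Z ⊆ Finset.univ.filter (fun k : Fin 9 => (k : ℕ) / 3 = (i : ℕ) / 3) := by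
        intro j hj
        simp only [Finset.mem_filter, Finset.mem_univ, true_and]
        exact same_block j i hj hi
      have := Finset.card_le_card hsub
      have hb : (Finset.univ.filter (fun k : Fin 9 => (k : ℕ) / 3 = (i : ℕ) / 3)).card ≤ 3 := by
        fin_cases i <;> decide
      omega
  have hfilter : Finset.univ.filter (fun j => v j ≠ 0) = Finset.univ \ Z := by
    rw [hZ, Finset.filter_not]
  rw [hfilter, Finset.card_sdiff_of_subset (Finset.subset_univ Z)]
  have : (Finset.univ : Finset (Fin 9)).card = 9 := by decide
  omega
end
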